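/- Suppose a sampling design on U with indicators I_U = (I_1,…,I_N) is conditionally negatively associated (CNA). Then the complementary design with indicators J_U = 1 − I_U is also CNA. In particular, since Till\'e's elimination procedure is CNA, the generalized Midzuno method (its complementary design) is CNA. -/

import Mathlib

open MeasureTheory ProbabilityTheory

variable {Ω : Type*} [MeasurableSpace Ω] {N : ℕ}

/-- A family of sample-membership indicators `I` is negatively associated (NA) under `μ`
if for all disjoint index sets `A, B` and coordinatewise non-decreasing functions `f, g`
depending only on the `A`- resp. `B`-coordinates, `Cov[f(I), g(I)] ≤ 0`. -/
def IsNA (μ : Measure Ω) (I : Ω → Fin N → ℝ) : Prop :=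
  ∀ A B : Finset (Fin N), Disjoint A B →
    ∀ f g : (Fin N → ℝ) → ℝ, Monotone f → Monotone g →
      (∀ x y : Fin N → ℝ, (∀ k ∈ A, x k = y k) → f x = f y) →
      (∀ x y : Fin N → ℝ, (∀ k ∈ B, x k = y k) → g x = g y) →
      Integrable (fun ω => f (I ω)) μ → Integrable (fun ω => g (I ω)) μ →
      Integrable (fun ω => f (I ω) * g (I ω)) μ →
      ∫ ω, f (I ω) * g (I ω) ∂μ ≤ (∫ ω, f (I ω) ∂μ) * ∫ ω, g (I ω) ∂μ

/-- A design is conditionally negatively associated (CNA) if, after conditioning on any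
subset `C` of the sample indicators taking any values `c`, the design is still NA. -/
def IsCNA (μ : Measure Ω) (I : Ω → Fin N → ℝ) : Prop :=
  ∀ C : Finset (Fin N), ∀ c : Fin N → ℝ,
    0 < μ {ω | ∀ k ∈ C, I ω k = c k} →
    IsNA (μ[|{ω | ∀ k ∈ C, I ω k = c k}]) I

/-- If a sampling design with indicators `I` (taking values in `{0,1}`) is CNA, then the
complementary design with indicators `J = 1 − I` is also CNA.  (In particular, since
Tillé's elimination procedure is CNA, the generalized Midzuno method is CNA.) -/
theorem complement_design_CNA (μ : Measure Ω) [IsProbabilityMeasure μ]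
    (I : Ω → Fin N → ℝ) (hI : ∀ ω k, I ω k = 0 ∨ I ω k = 1)
    (hCNA : IsCNA μ I) :
    IsCNA μ (fun ω k => 1 - I ω k) := by
  intro C c hpos
  have hset : {ω | ∀ k ∈ C, (fun ω k => 1 - I ω k) ω k = c k}
      = {ω | ∀ k ∈ C, I ω k = (fun k => 1 - c k) k} := by
    ext ω
    simp only [Set.mem_setOf_eq]
    constructor <;> intro h k hk <;> have := h k hk <;> linarith
  rw [hset] at hpos ⊢
  have hNA := hCNA C (fun k => 1 - c k) hpos
  intro A B hAB f g hf hg hfA hgB hfi hgi hfgi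
  set ν := μ[|{ω | ∀ k ∈ C, I ω k = (fun k => 1 - c k) k}] with hν
  have hF : Monotone (fun x : Fin N → ℝ => -f (fun k => 1 - x k)) := by
    intro x y hxy
    simp only [neg_le_neg_iff]
    exact hf fun k => by linarith [hxy k]
  have hG : Monotone (fun x : Fin N → ℝ => -g (fun k => 1 - x k)) := by
    intro x y hxy
    simp only [neg_le_neg_iff]
    exact hg fun k => by linarith [hxy k]
  have key := hNA A B hAB (fun x => -f (fun k => 1 - x k)) (fun x => -g (fun k => 1 - x k))
    hF hG
    (fun x y h => by
      have := hfA (fun k => 1 - x k) (fun k => 1 - y k) (fun k hk => by simp [h k hk])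
      simp [this])
    (fun x y h => by
      have := hgB (fun k => 1 - x k) (fun k => 1 - y k) (fun k hk => by simp [h k hk])
      simp [this])
    hfi.neg
    hgi.neg
    (by simpa [neg_mul_neg] using hfgi)
  simp only [neg_mul_neg, integral_neg, neg_mul_neg] at key
  exact key
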